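/- Let α ∈ (1,2), let q be an integer with |q| ≥ 2, and let x ∈ [0,π]. Define θ(x) = 2·arctan( 2·sin(x/2) / (cos(x/2) + √(1 + 3·sin²(x/2))) ). Then (1/(q−1)) · (2·sin(x/2))^α · (1 + 3·sin²(x/2))^{α/2} · [ q·cos(α·(x − π/2 − θ(x)) − x) − cos(α·(x − π/2 − θ(x)) − q·x) ] ≤ 0. -/

import Mathlib

open Real Set

lemma sin_ge_cubic {t : ℝ} (ht : 0 ≤ t) : t - t ^ 3 / 6 ≤ Real.sin t := by
  have hd : ∀ u : ℝ, HasDerivAt (fun u : ℝ => Real.sin u - u + u ^ 3 / 6)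
      (Real.cos u - 1 + u ^ 2 / 2) u := by
    intro u
    have h1 := Real.hasDerivAt_sin u
    have h2 := hasDerivAt_id u
    have h3 := (hasDerivAt_pow 3 u).div_const 6
    refine ((h1.sub h2).add h3).congr_deriv ?_
    push_cast
    ring
  have hmono : Monotone (fun u : ℝ => Real.sin u - u + u ^ 3 / 6) := by
    apply monotone_of_deriv_nonneg (fun u => (hd u).differentiableAt)
    intro u
    rw [(hd u).deriv]
    nlinarith [Real.one_sub_sq_div_two_le_cos (x := u)]
  have h := hmono ht
  simp only [Real.sin_zero] at h
  nlinarith [h]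

lemma cos_le_quartic {t : ℝ} (ht : 0 ≤ t) : Real.cos t ≤ 1 - t ^ 2 / 2 + t ^ 4 / 24 := by
  have hd : ∀ u : ℝ, HasDerivAt (fun u : ℝ => 1 - u ^ 2 / 2 + u ^ 4 / 24 - Real.cos u)
      (-(u) + u ^ 3 / 6 + Real.sin u) u := by
    intro u
    have h1 := ((hasDerivAt_pow 2 u).div_const 2)
    have h2 := ((hasDerivAt_pow 4 u).div_const 24)
    have h3 := Real.hasDerivAt_cos u
    refine ((((hasDerivAt_const u (1:ℝ)).sub h1).add h2).sub h3).congr_deriv ?_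
    push_cast
    ring
  have hmono : MonotoneOn (fun u : ℝ => 1 - u ^ 2 / 2 + u ^ 4 / 24 - Real.cos u) (Ici 0) := by
    apply monotoneOn_of_deriv_nonneg (convex_Ici 0)
    · exact (Continuous.continuousOn (by continuity))
    · exact fun u _ => ((hd u).differentiableAt).differentiableWithinAt
    · intro u hu
      rw [interior_Ici] at hu
      rw [(hd u).deriv]
      nlinarith [sin_ge_cubic (le_of_lt hu)]
  have h := hmono (self_mem_Ici) (mem_Ici.mpr ht) ht
  simp only [Real.cos_zero] at h
  nlinarith [h]

lemma sin_le_quintic {t : ℝ} (ht : 0 ≤ t) : Real.sin t ≤ t - t ^ 3 / 6 + t ^ 5 / 120 := by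
  have hd : ∀ u : ℝ, HasDerivAt (fun u : ℝ => u - u ^ 3 / 6 + u ^ 5 / 120 - Real.sin u)
      (1 - u ^ 2 / 2 + u ^ 4 / 24 - Real.cos u) u := by
    intro u
    have h1 := hasDerivAt_id u
    have h2 := ((hasDerivAt_pow 3 u).div_const 6)
    have h3 := ((hasDerivAt_pow 5 u).div_const 120)
    have h4 := Real.hasDerivAt_sin u
    refine (((h1.sub h2).add h3).sub h4).congr_deriv ?_
    push_cast
    ring
  have hmono : MonotoneOn (fun u : ℝ => u - u ^ 3 / 6 + u ^ 5 / 120 - Real.sin u) (Ici 0) := by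
    apply monotoneOn_of_deriv_nonneg (convex_Ici 0)
    · exact (Continuous.continuousOn (by continuity))
    · exact fun u _ => ((hd u).differentiableAt).differentiableWithinAt
    · intro u hu
      rw [interior_Ici] at hu
      rw [(hd u).deriv]
      nlinarith [cos_le_quartic (le_of_lt hu)]
  have h := hmono (self_mem_Ici) (mem_Ici.mpr ht) ht
  simp only [Real.sin_zero] at h
  nlinarith [h]

lemma abs_sin_nat_mul_le (x : ℝ) (hs : 0 ≤ Real.sin x) :
    ∀ n : ℕ, |Real.sin (n * x)| ≤ n * Real.sin x := by
  intro n
  induction n with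
  | zero => simp
  | succ k ih =>
    push_cast
    have he : ((k : ℝ) + 1) * x = (k : ℝ) * x + x := by ring
    rw [he, Real.sin_add]
    calc |Real.sin ((k:ℝ)*x) * Real.cos x + Real.cos ((k:ℝ)*x) * Real.sin x|
        ≤ |Real.sin ((k:ℝ)*x) * Real.cos x| + |Real.cos ((k:ℝ)*x) * Real.sin x| := abs_add_le _ _
      _ ≤ |Real.sin ((k:ℝ)*x)| * 1 + 1 * Real.sin x := by
          have a1 : |Real.sin ((k:ℝ)*x) * Real.cos x| ≤ |Real.sin ((k:ℝ)*x)| * 1 := by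
            rw [abs_mul]
            exact mul_le_mul_of_nonneg_left (Real.abs_cos_le_one x) (abs_nonneg _)
          have a2 : |Real.cos ((k:ℝ)*x) * Real.sin x| ≤ 1 * Real.sin x := by
            rw [abs_mul, abs_of_nonneg hs]
            exact mul_le_mul_of_nonneg_right (Real.abs_cos_le_one _) hs
          linarith
      _ ≤ (k:ℝ) * Real.sin x + Real.sin x := by
          have := ih
          push_cast at this
          nlinarith [this]
      _ = ((k:ℝ)+1) * Real.sin x := by ring

lemma delta_small {δ : ℝ} (h0 : 0 ≤ δ) (htop : δ ≤ 5*Real.pi/6) (hs : Real.sin δ < 1/2) :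
    δ < Real.pi/6 := by
  have hpi := Real.pi_pos
  by_contra hcon
  push_neg at hcon
  rcases le_or_gt δ (Real.pi/2) with hh | hh
  · have hm := Real.strictMonoOn_sin.monotoneOn
      (⟨by linarith, by linarith⟩ : Real.pi/6 ∈ Set.Icc (-(Real.pi/2)) (Real.pi/2))
      (⟨by linarith, hh⟩ : δ ∈ Set.Icc (-(Real.pi/2)) (Real.pi/2)) hcon
    rw [Real.sin_pi_div_six] at hm
    linarith
  · have hm := Real.strictMonoOn_sin.monotoneOn
      (⟨by linarith, by linarith⟩ : Real.pi/6 ∈ Set.Icc (-(Real.pi/2)) (Real.pi/2))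
      (⟨by linarith, by linarith⟩ : Real.pi - δ ∈ Set.Icc (-(Real.pi/2)) (Real.pi/2))
      (by linarith)
    rw [Real.sin_pi_div_six, Real.sin_pi_sub] at hm
    linarith

lemma kc_ineq {δ θ s c r : ℝ} (hrpos : 0 < r)
    (hθsin : Real.sin θ = 2*s/r) (hθcos : Real.cos θ = c/r)
    (hθ0 : 0 ≤ θ) (hθδ : θ ≤ δ) (hδtop : δ ≤ 5*Real.pi/6) :
    2*s*Real.cos δ ≤ c*Real.sin δ := by
  have hpi := Real.pi_pos
  have hsd : 0 ≤ Real.sin (δ - θ) :=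
    Real.sin_nonneg_of_nonneg_of_le_pi (by linarith) (by linarith)
  rw [Real.sin_sub, hθsin, hθcos] at hsd
  have h := mul_nonneg hsd hrpos.le
  have he : (Real.sin δ * (c/r) - Real.cos δ * (2*s/r)) * r
      = Real.sin δ * c - Real.cos δ * (2*s) := by
    field_simp
  rw [he] at h
  linarith

set_option maxHeartbeats 1000000 in
lemma key_pos (x δ s c r θ Q : ℝ) (n : ℕ)
    (hx0 : 0 ≤ x) (hxpi : x ≤ Real.pi)
    (hsx : Real.sin x = 2*s*c)
    (hs0 : 0 ≤ s) (hc0 : 0 ≤ c) (hc1 : c ≤ 1)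
    (hrpos : 0 < r)
    (hθsin : Real.sin θ = 2*s/r) (hθcos : Real.cos θ = c/r)
    (hθ0 : 0 ≤ θ) (hθδ : θ ≤ δ) (hδtop : δ ≤ 5*Real.pi/6)
    (hQ : 2 ≤ Q) (hn : (n:ℝ) = Q - 1) :
    Real.sin (δ + (Q-1)*x) ≤ Q * Real.sin δ := by
  have hpi := Real.pi_pos
  have hδ0 : 0 ≤ δ := le_trans hθ0 hθδ
  have hsinδ0 : 0 ≤ Real.sin δ :=
    Real.sin_nonneg_of_nonneg_of_le_pi hδ0 (by linarith)
  rcases le_or_gt (1/2) (Real.sin δ) with hA | hB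
  · linarith only [Real.sin_le_one (δ + (Q-1)*x), hA, hQ,
      mul_nonneg (show (0:ℝ) ≤ Q - 2 by linarith) (show (0:ℝ) ≤ Real.sin δ - 1/2 by linarith)]
  · have hδ6 : δ < Real.pi/6 := delta_small hδ0 hδtop hB
    have hcosδ0 : 0 ≤ Real.cos δ :=
      Real.cos_nonneg_of_mem_Icc ⟨by linarith, by linarith⟩
    have hKC : 2*s*Real.cos δ ≤ c*Real.sin δ := kc_ineq hrpos hθsin hθcos hθ0 hθδ hδtop
    rw [Real.sin_add]
    have hw1 : Real.sin δ * Real.cos ((Q-1)*x) ≤ Real.sin δ := by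
      linarith only [mul_nonneg hsinδ0 (sub_nonneg.2 (Real.cos_le_one ((Q-1)*x)))]
    have hw2 : Real.cos δ * Real.sin ((Q-1)*x) ≤ (Q-1) * Real.sin δ := by
      rcases le_or_gt (Real.sin ((Q-1)*x)) 0 with hneg | hpos
      · linarith only [mul_nonneg hcosδ0 (neg_nonneg.2 hneg),
          mul_nonneg (show (0:ℝ) ≤ Q-1 by linarith) hsinδ0]
      · have hsinx0 : 0 ≤ Real.sin x :=
          Real.sin_nonneg_of_nonneg_of_le_pi hx0 hxpi
        have habs := abs_sin_nat_mul_le x hsinx0 n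
        rw [hn] at habs
        have hsinle : Real.sin ((Q-1)*x) ≤ (Q-1)*Real.sin x := (le_abs_self _).trans habs
        have t1 : Real.cos δ * Real.sin ((Q-1)*x) ≤ Real.cos δ * ((Q-1)*(2*s*c)) := by
          rw [← hsx]
          exact mul_le_mul_of_nonneg_left hsinle hcosδ0
        have t2 : (Q-1)*c*(2*s*Real.cos δ) ≤ (Q-1)*c*(c*Real.sin δ) :=
          mul_le_mul_of_nonneg_left hKC (mul_nonneg (by linarith) hc0)
        have hc2 : c^2 ≤ 1 := by
          linarith only [mul_nonneg hc0 (sub_nonneg.2 hc1), hc1, hc0]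
        linarith only [t1, t2,
          mul_nonneg (mul_nonneg (show (0:ℝ) ≤ Q-1 by linarith) hsinδ0) (sub_nonneg.2 hc2)]
    linarith only [hw1, hw2, hsinδ0]

set_option maxHeartbeats 1000000 in
lemma key_neg (x δ s c r θ P : ℝ)
    (hx0 : 0 ≤ x) (hxpi : x ≤ Real.pi)
    (hsx : Real.sin x = 2*s*c) (hcx : Real.cos x = 1 - 2*s^2)
    (htay2 : x/2 - (x/2)^3/6 ≤ s) (htay3 : c ≤ 1 - (x/2)^2/2 + (x/2)^4/24)
    (hs0 : 0 ≤ s) (hc0 : 0 ≤ c) (hc1 : c ≤ 1) (hsc : s^2 + c^2 = 1)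
    (hrpos : 0 < r) (hr2 : r^2 = 1 + 3*s^2)
    (hθsin : Real.sin θ = 2*s/r) (hθcos : Real.cos θ = c/r)
    (hθ0 : 0 ≤ θ) (hθδ : θ ≤ δ) (hδtop : δ ≤ 5*Real.pi/6)
    (hP : 2 ≤ P) (hPcase : P = 2 ∨ 3 ≤ P) :
    Real.sin ((P+1)*x - δ) ≤ P * Real.sin δ := by
  have hpi := Real.pi_pos
  have hpi4 : Real.pi ≤ 4 := Real.pi_le_four
  have hδ0 : 0 ≤ δ := le_trans hθ0 hθδ
  have hsinδ0 : 0 ≤ Real.sin δ :=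
    Real.sin_nonneg_of_nonneg_of_le_pi hδ0 (by linarith)
  rcases le_or_gt (1/2) (Real.sin δ) with hA | hB
  · linarith only [Real.sin_le_one ((P+1)*x - δ), hA, hP,
      mul_nonneg (show (0:ℝ) ≤ P - 2 by linarith) (show (0:ℝ) ≤ Real.sin δ - 1/2 by linarith)]
  · have hδ6 : δ < Real.pi/6 := delta_small hδ0 hδtop hB
    have hcosδ0 : 0 ≤ Real.cos δ :=
      Real.cos_nonneg_of_mem_Icc ⟨by linarith, by linarith⟩
    have hKC : 2*s*Real.cos δ ≤ c*Real.sin δ := kc_ineq hrpos hθsin hθcos hθ0 hθδ hδtop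
    rcases le_or_gt 1 (P * Real.sin δ) with hps | hps
    · linarith only [Real.sin_le_one ((P+1)*x - δ), hps]
    · have hP0 : (0:ℝ) < P := by linarith
      have hsθδ : Real.sin θ ≤ Real.sin δ := by
        exact Real.strictMonoOn_sin.monotoneOn
          (⟨by linarith, by linarith⟩ : θ ∈ Set.Icc (-(Real.pi/2)) (Real.pi/2))
          (⟨by linarith, by linarith⟩ : δ ∈ Set.Icc (-(Real.pi/2)) (Real.pi/2)) hθδ
      rw [hθsin, div_le_iff₀ hrpos] at hsθδ
      have h2sP : 2*s*P < r := by
        have e1 := mul_le_mul_of_nonneg_right hsθδ hP0.le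
        have e2 := mul_lt_mul_of_pos_right hps hrpos
        nlinarith only [e1, e2]
      have hσP : 4*s^2*P^2 < 1 + 3*s^2 := by
        have e := mul_pos (show (0:ℝ) < r - 2*s*P by linarith)
          (show (0:ℝ) < r + 2*s*P by
            linarith only [hrpos, mul_nonneg hs0 hP0.le])
        nlinarith only [e, hr2]
      have hP2 : 4 ≤ P^2 := by
        nlinarith only [mul_nonneg (show (0:ℝ) ≤ P-2 by linarith)
          (show (0:ℝ) ≤ P+2 by linarith)]
      have hs13 : 13*s^2 < 1 := by
        nlinarith only [mul_le_mul_of_nonneg_right hP2 (mul_nonneg hs0 hs0), hσP]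
      have hcpos : 0 < c := by
        have hcc : c^2 ≤ c := by
          nlinarith only [mul_nonneg hc0 (sub_nonneg.2 hc1)]
        linarith only [hsc, hs13, hcc]
      have hxc : x*c ≤ 2*s := by
        have e1 := mul_le_mul_of_nonneg_left htay3 hx0
        have e3 := mul_nonneg (mul_nonneg (mul_nonneg hx0 hx0) hx0)
            (show (0:ℝ) ≤ 32 - x^2 by nlinarith only [hx0, hxpi, hpi4])
        nlinarith only [e1, htay2, e3]
      have hxx : x^2*(1-s^2) ≤ 4*s^2 := by
        have e := mul_nonneg (sub_nonneg.2 hxc)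
          (add_nonneg (mul_nonneg (by norm_num : (0:ℝ) ≤ 2) hs0) (mul_nonneg hx0 hc0))
        have e2 : x^2*(s^2+c^2) = x^2*1 := by rw [hsc]
        nlinarith only [e, e2]
      have h1σ : (0:ℝ) < 1 - s^2 := by linarith only [hs13, sq_nonneg s]
      have hP21 : (0:ℝ) ≤ P^2 - 1 := by linarith only [hP2]
      have hx2 : x^2*(P^2-1) ≤ 1 := by
        by_contra hcon
        push_neg at hcon
        have e1 := mul_lt_mul_of_pos_right hcon h1σ
        have e2 := mul_le_mul_of_nonneg_left hxx hP21
        nlinarith only [e1, e2, hσP]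
      rw [Real.sin_sub]
      have hPc0 : 0 ≤ P + Real.cos ((P+1)*x) := by
        linarith only [Real.neg_one_le_cos ((P+1)*x), hP]
      rcases le_or_gt (Real.sin ((P+1)*x)) 0 with hneg | hpos
      · have t1 : Real.sin ((P+1)*x) * Real.cos δ ≤ 0 :=
          mul_nonpos_iff.2 (Or.inr ⟨hneg, hcosδ0⟩)
        have t2 : -1 * Real.sin δ ≤ Real.cos ((P+1)*x) * Real.sin δ :=
          mul_le_mul_of_nonneg_right (Real.neg_one_le_cos _) hsinδ0
        linarith only [t1, t2, mul_nonneg (show (0:ℝ) ≤ P - 1 by linarith) hsinδ0]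
      · have hKK : c * Real.sin ((P+1)*x) ≤ (P + Real.cos ((P+1)*x)) * (2*s) := by
          rcases hPcase with hP2eq | hP3
          · subst hP2eq
            rw [show ((2:ℝ)+1)*x = 3*x by norm_num, Real.sin_three_mul, Real.cos_three_mul,
              hsx, hcx]
            have hz : (32*s^3*c^2 - 6*s - 64*s^5 + 32*s^3)*(s^2+c^2-1) = 0 := by
              rw [show s^2+c^2-1 = 0 by linarith only [hsc], mul_zero]
            have hident : (2 + (4*(1-2*s^2)^3 - 3*(1-2*s^2)))*(2*s)
                - c*(3*(2*s*c) - 4*(2*s*c)^3)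
                = 2*s^3*(1+16*s^2*c^2)
                  + (32*s^3*c^2 - 6*s - 64*s^5 + 32*s^3)*(s^2+c^2-1) := by ring
            linarith only [hident, hz, mul_nonneg (mul_nonneg hs0 (mul_nonneg hs0 hs0))
              (show (0:ℝ) ≤ 1+16*s^2*c^2 by positivity)]
          · have hM4 : 4 ≤ P+1 := by linarith
            have hMx0 : 0 ≤ (P+1)*x := mul_nonneg (by linarith) hx0
            have hq5 := sin_le_quintic hMx0
            have hcosb := Real.one_sub_sq_div_two_le_cos (x := (P+1)*x)
            have h2s : x - x^3/24 ≤ 2*s := by linarith only [htay2]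
            have h4x : x ≤ 4 := by linarith only [hxpi, hpi4]
            have hx24 : 0 ≤ x - x^3/24 := by
              linarith only [mul_nonneg (mul_nonneg hx0 hx0) (sub_nonneg.2 h4x),
                mul_nonneg hx0 (sub_nonneg.2 h4x), hx0]
            have hx2' : x^2*((P+1)^2-2*(P+1)) ≤ 1 := by
              have he : (P+1)^2-2*(P+1) = P^2-1 := by ring
              rw [he]; exact hx2
            have hPx2 : (P+1)*x^2 ≤ 1/2 := by
              have e1 := mul_le_mul_of_nonneg_right (show (2:ℝ) ≤ P-1 by linarith)
                (mul_nonneg (show (0:ℝ) ≤ P+1 by linarith) (sq_nonneg x))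
              nlinarith only [e1, hx2]
            have hMM : 0 ≤ (P+1) - (P+1)^2*x^2/2 := by
              have e2 := mul_le_mul_of_nonneg_left hPx2 (show (0:ℝ) ≤ P+1 by linarith)
              nlinarith only [e2, hP]
            have hPcos : (P+1) - (P+1)^2*x^2/2 ≤ P + Real.cos ((P+1)*x) := by
              nlinarith only [hcosb]
            have hprod : ((P+1) - (P+1)^2*x^2/2) * (x - x^3/24)
                ≤ (P + Real.cos ((P+1)*x))*(2*s) :=
              mul_le_mul hPcos h2s hx24 hPc0
            have hcs : c * Real.sin ((P+1)*x) ≤ Real.sin ((P+1)*x) := by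
              linarith only [mul_nonneg (sub_nonneg.2 hc1) hpos.le]
            have hcube : (64:ℝ) ≤ (P+1)^3 := by
              nlinarith only [mul_nonneg (sub_nonneg.2 hM4)
                (show (0:ℝ) ≤ (P+1)^2 + 4*(P+1) + 16 by positivity)]
            have hD : (0:ℝ) ≤ (P+1)^5/120 - (P+1)^2/48 := by
              nlinarith only [mul_nonneg (sq_nonneg (P+1)) (sub_nonneg.2 hcube)]
            have hcoef : (P+1)^5/120 - (P+1)^2/48
                ≤ ((P+1)^2-2*(P+1))*((P+1)^3/6 - (P+1)^2/2 - (P+1)/24) := by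
              have h4 : (0:ℝ) ≤ P - 3 := by linarith
              nlinarith only [mul_nonneg (sq_nonneg (P+1)) (mul_nonneg (mul_nonneg h4 h4) h4),
                mul_nonneg (sq_nonneg (P+1)) (mul_nonneg h4 h4),
                mul_nonneg (sq_nonneg (P+1)) h4, sq_nonneg (P+1)]
            have hMMpos : (0:ℝ) < (P+1)^2-2*(P+1) := by
              nlinarith only [mul_nonneg (sub_nonneg.2 hP3) (show (0:ℝ) ≤ P+3 by linarith), hP3]
            have hxD : x^2*((P+1)^5/120 - (P+1)^2/48)
                ≤ (P+1)^3/6 - (P+1)^2/2 - (P+1)/24 := by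
              by_contra hcon
              push_neg at hcon
              have e1 := mul_le_mul_of_nonneg_right hx2' hD
              have e2 := mul_lt_mul_of_pos_left hcon hMMpos
              nlinarith only [e1, e2, hcoef]
            have hkey : (P+1)*x - ((P+1)*x)^3/6 + ((P+1)*x)^5/120
                ≤ ((P+1) - (P+1)^2*x^2/2)*(x - x^3/24) := by
              have e := mul_nonneg (mul_nonneg (mul_nonneg hx0 hx0) hx0) (sub_nonneg.2 hxD)
              nlinarith only [e]
            calc c * Real.sin ((P+1)*x) ≤ Real.sin ((P+1)*x) := hcs
              _ ≤ (P+1)*x - ((P+1)*x)^3/6 + ((P+1)*x)^5/120 := hq5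
              _ ≤ ((P+1) - (P+1)^2*x^2/2)*(x - x^3/24) := hkey
              _ ≤ (P + Real.cos ((P+1)*x))*(2*s) := hprod
        have t1 := mul_le_mul_of_nonneg_right hKK hcosδ0
        have t2 := mul_le_mul_of_nonneg_left hKC hPc0
        have hcc : c * (Real.sin ((P+1)*x) * Real.cos δ)
            ≤ c * ((P + Real.cos ((P+1)*x)) * Real.sin δ) := by linarith only [t1, t2]
        have hdd := le_of_mul_le_mul_left hcc hcpos
        linarith only [hdd]

set_option maxHeartbeats 1000000 in
lemma lemL3 (x s r θ : ℝ)
    (hxpi : x ≤ Real.pi)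
    (hs0 : 0 ≤ s) (hs1 : s ≤ 1)
    (hcosx : Real.cos x = 1 - 2*s^2)
    (hrpos : 0 < r) (hr2 : r^2 = 1 + 3*s^2)
    (hθsin : Real.sin θ = 2*s/r) (hθ0 : 0 ≤ θ) (hθtop : θ ≤ Real.pi/2) :
    x - Real.pi/2 ≤ θ := by
  have hpi := Real.pi_pos
  rcases le_or_gt x (Real.pi/2) with h | h
  · linarith
  · by_contra hcon
    push_neg at hcon
    have hlt := Real.strictMonoOn_sin
      (⟨by linarith, hθtop⟩ : θ ∈ Set.Icc (-(Real.pi/2)) (Real.pi/2))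
      (⟨by linarith, by linarith⟩ : x - Real.pi/2 ∈ Set.Icc (-(Real.pi/2)) (Real.pi/2)) hcon
    have hsx : Real.sin (x - Real.pi/2) = -Real.cos x := by
      rw [Real.sin_sub, Real.sin_pi_div_two, Real.cos_pi_div_two]; ring
    rw [hθsin, hsx, hcosx, div_lt_iff₀ hrpos] at hlt
    -- hlt : 2*s < -(1 - 2*s^2) * r
    have hσ : 1/2 ≤ s ^ 2 := by
      by_contra hσc
      push_neg at hσc
      have e := mul_pos (show (0:ℝ) < 1 - 2*s^2 by linarith) hrpos
      nlinarith only [hlt, hs0, e]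
    have key : (0:ℝ) ≤ (1 - s^2) * (12*s^4 + 4*s^2 - 1) :=
      mul_nonneg (by nlinarith only [mul_nonneg (sub_nonneg.2 hs1) (add_nonneg hs0 (by norm_num : (0:ℝ) ≤ 1))])
        (by linarith only [hσ, sq_nonneg (s^2)])
    have er : (2*s^2-1)^2 * r^2 = (2*s^2-1)^2 * (1+3*s^2) := by rw [hr2]
    have hsqle : ((2*s^2 - 1) * r)^2 ≤ (2*s)^2 := by nlinarith only [er, key]
    have hpos1 : (0:ℝ) < (2*s^2-1)*r - 2*s := by nlinarith only [hlt]
    have hpos2 : (0:ℝ) < (2*s^2-1)*r + 2*s := by nlinarith only [hlt, hs0]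
    nlinarith only [mul_pos hpos1 hpos2, hsqle]

set_option maxHeartbeats 1000000 in
lemma lemL4 (x s c r θ : ℝ)
    (hx0 : 0 ≤ x) (hxpi : x ≤ Real.pi)
    (hs_def : s = Real.sin (x/2))
    (hs0 : 0 ≤ s) (hc0 : 0 ≤ c) (hsc : s^2 + c^2 = 1)
    (hsinx : Real.sin x = 2*s*c) (hcosx : Real.cos x = 1 - 2*s^2)
    (hrpos : 0 < r) (hr2 : r^2 = 1 + 3*s^2)
    (hθsin : Real.sin θ = 2*s/r)
    (hθ0 : 0 ≤ θ) (hθtop : θ ≤ Real.pi/2) :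
    2*θ ≤ x + Real.pi/3 := by
  have hpi := Real.pi_pos
  rcases le_or_gt (2*Real.pi/3) x with h | h
  · linarith
  · by_contra hcon
    push_neg at hcon
    have hlt := Real.strictAntiOn_cos
      (⟨by linarith, by linarith⟩ : x + Real.pi/3 ∈ Set.Icc 0 Real.pi)
      (⟨by linarith, by linarith⟩ : 2*θ ∈ Set.Icc 0 Real.pi) hcon
    -- hlt : cos (2θ) < cos (x + π/3)
    have hc2θ : Real.cos (2*θ) = 1 - 2*(2*s/r)^2 := by
      have hp := Real.sin_sq_add_cos_sq θ
      rw [Real.cos_two_mul', hθsin]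
      rw [hθsin] at hp
      linarith only [hp]
    have hcx3 : Real.cos (x + Real.pi/3) = (1-2*s^2)*(1/2) - (2*s*c)*(Real.sqrt 3/2) := by
      rw [Real.cos_add, Real.cos_pi_div_three, Real.sin_pi_div_three, hcosx, hsinx]
    rw [hc2θ, hcx3] at hlt
    have h3 : Real.sqrt 3 ^ 2 = 3 := Real.sq_sqrt (by norm_num)
    have h30 : 0 ≤ Real.sqrt 3 := Real.sqrt_nonneg 3
    have hs34 : s^2 ≤ 3/4 := by
      have hmono := Real.strictMonoOn_sin.monotoneOn
        (⟨by linarith, by linarith⟩ : x/2 ∈ Set.Icc (-(Real.pi/2)) (Real.pi/2))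
        (⟨by linarith, by linarith⟩ : (Real.pi/3:ℝ) ∈ Set.Icc (-(Real.pi/2)) (Real.pi/2))
        (by linarith)
      rw [Real.sin_pi_div_three, ← hs_def] at hmono
      nlinarith only [h3, hmono, hs0, h30]
    have hrr : (1 - 2*(2*s/r)^2) * r^2 = r^2 - 8*s^2 := by field_simp; ring
    have hKC : ((1-2*s^2)*(1/2) - (2*s*c)*(Real.sqrt 3/2)) * r^2 ≤ (1 - 2*(2*s/r)^2) * r^2 := by
      rw [hrr, hr2]
      rcases le_or_gt 0 (1 - 11*s^2 + 6*s^4) with hposs | hneg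
      · have hterm : 0 ≤ Real.sqrt 3 * (s*c) * (1+3*s^2) :=
          mul_nonneg (mul_nonneg h30 (mul_nonneg hs0 hc0)) (by positivity)
        nlinarith only [hposs, hterm, h3]
      · have h111 : 1/11 ≤ s^2 := by linarith only [hneg, sq_nonneg (s^2)]
        have hu : (0:ℝ) ≤ s^2 - 1/11 := by linarith
        have hv : (0:ℝ) ≤ 3/4 - s^2 := by linarith
        have hsq : (11*s^2 - 6*s^4 - 1)^2 ≤ 12*s^2*c^2*(1+3*s^2)^2 := by
          have hc2 : c^2 = 1 - s^2 := by linarith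
          rw [hc2]
          nlinarith only [mul_nonneg (mul_nonneg (mul_nonneg hu hu) hu) hu,
            mul_nonneg (mul_nonneg (mul_nonneg hu hu) hu) hv,
            mul_nonneg (mul_nonneg (mul_nonneg hu hu) hv) hv,
            mul_nonneg (mul_nonneg (mul_nonneg hu hv) hv) hv,
            mul_nonneg (mul_nonneg (mul_nonneg hv hv) hv) hv]
        have hL0 : 0 ≤ Real.sqrt 3 * (s*c) * (1+3*s^2) :=
          mul_nonneg (mul_nonneg h30 (mul_nonneg hs0 hc0)) (by positivity)
        have hLsq : (Real.sqrt 3 * (s*c) * (1+3*s^2))^2 = 3*(s*c)^2*(1+3*s^2)^2 := by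
          rw [mul_pow, mul_pow, h3]
        have hRpos : 0 < 11*s^2 - 6*s^4 - 1 := by linarith
        have hsq4 : (11*s^2 - 6*s^4 - 1)^2 ≤ 4*(Real.sqrt 3 * (s*c) * (1+3*s^2))^2 := by
          rw [hLsq]; nlinarith only [hsq]
        have hge : (11*s^2 - 6*s^4 - 1)/2 ≤ Real.sqrt 3 * (s*c) * (1+3*s^2) := by
          generalize hLg : Real.sqrt 3 * (s*c) * (1+3*s^2) = L at hsq4 hL0
          generalize hRg : 11*s^2 - 6*s^4 - 1 = R at hsq4 hRpos ⊢
          nlinarith only [hsq4, hL0, hRpos]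
        nlinarith only [hge]
    have hfin := le_of_mul_le_mul_right (hKC) (by positivity : (0:ℝ) < r^2)
    linarith

set_option maxHeartbeats 1000000 in
/-- Nonpositivity of the generating function `f_{1,q}(α,x)` of the symmetric part of the
WSLD matrix `A_{1,q}^α` for `|q| ≥ 2` and `x ∈ [0,π]`. -/
theorem stmt12 (α : ℝ) (h1 : 1 < α) (h2 : α < 2) (q : ℤ) (hq : 2 ≤ |q|)
    (x : ℝ) (hx : x ∈ Set.Icc (0 : ℝ) Real.pi) :
    (1 / ((q : ℝ) - 1)) * (2 * Real.sin (x / 2)) ^ α *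
        (1 + 3 * Real.sin (x / 2) ^ 2) ^ (α / 2) *
        ((q : ℝ) * Real.cos (α * (x - Real.pi / 2 -
              2 * Real.arctan (2 * Real.sin (x / 2) /
                (Real.cos (x / 2) + Real.sqrt (1 + 3 * Real.sin (x / 2) ^ 2)))) - x) -
          Real.cos (α * (x - Real.pi / 2 -
              2 * Real.arctan (2 * Real.sin (x / 2) /
                (Real.cos (x / 2) + Real.sqrt (1 + 3 * Real.sin (x / 2) ^ 2)))) - (q : ℝ) * x))
      ≤ 0 := by
  obtain ⟨hx0, hxpi⟩ := hx
  have hpi := Real.pi_pos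
  set s := Real.sin (x / 2) with hs_def
  set c := Real.cos (x / 2) with hc_def
  have hs0 : 0 ≤ s := Real.sin_nonneg_of_nonneg_of_le_pi (by linarith) (by linarith)
  have hc0 : 0 ≤ c := Real.cos_nonneg_of_mem_Icc ⟨by linarith, by linarith⟩
  have hsc : s ^ 2 + c ^ 2 = 1 := Real.sin_sq_add_cos_sq (x / 2)
  have hs1 : s ≤ 1 := Real.sin_le_one _
  have hc1 : c ≤ 1 := Real.cos_le_one _
  have hsinx : Real.sin x = 2 * s * c := by
    have h := Real.sin_two_mul (x/2)
    rw [show 2*(x/2) = x from by ring] at h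
    rw [h, hs_def, hc_def]
  have hcosx : Real.cos x = 1 - 2 * s ^ 2 := by
    have h := Real.cos_two_mul' (x/2)
    rw [show 2*(x/2) = x from by ring] at h
    rw [h, hs_def]
    linear_combination Real.sin_sq_add_cos_sq (x/2)
  have htay2 : x/2 - (x/2)^3/6 ≤ s := by
    rw [hs_def]; exact sin_ge_cubic (by linarith)
  have htay3 : c ≤ 1 - (x/2)^2/2 + (x/2)^4/24 := by
    rw [hc_def]; exact cos_le_quartic (by linarith)
  set r := Real.sqrt (1 + 3 * s ^ 2) with hr_def
  have hr2 : r ^ 2 = 1 + 3 * s ^ 2 := Real.sq_sqrt (by positivity)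
  have hr0 : 0 ≤ r := Real.sqrt_nonneg _
  have hr1 : 1 ≤ r := by nlinarith only [hr2, hr0, sq_nonneg s]
  have hrpos : (0:ℝ) < r := by linarith
  have hcr : 0 < c + r := by linarith
  have h2sr : 2 * s ≤ r := by nlinarith only [hr2, hs1, hs0, hr0]
  set θ := 2 * Real.arctan (2 * s / (c + r)) with hθ_def
  have hθsc : Real.sin θ = 2 * s / r ∧ Real.cos θ = c / r ∧ 0 ≤ θ ∧ θ ≤ Real.pi / 2 := by
    set w := 2 * s / (c + r) with hw_def
    clear_value w
    have hw0 : 0 ≤ w := by rw [hw_def]; positivity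
    have hw1 : w ≤ 1 := by rw [hw_def, div_le_one hcr]; linarith
    have h1wpos : (0:ℝ) < 1 + w ^ 2 := by positivity
    have hsqrt : Real.sqrt (1 + w ^ 2) ^ 2 = 1 + w ^ 2 := Real.sq_sqrt h1wpos.le
    have hsqrtpos : 0 < Real.sqrt (1 + w ^ 2) := Real.sqrt_pos.mpr h1wpos
    have h1w : (1 + w ^ 2) * (c + r) = 2 * r := by
      rw [hw_def]
      field_simp
      linear_combination hsc - hr2
    have h1w' : (1 - w ^ 2) * (c + r) = 2 * c := by
      rw [hw_def]
      field_simp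
      linear_combination hr2 - hsc
    refine ⟨?_, ?_, ?_, ?_⟩
    · rw [hθ_def, Real.sin_two_mul, Real.sin_arctan, Real.cos_arctan]
      rw [show 2 * (w / Real.sqrt (1 + w ^ 2)) * (1 / Real.sqrt (1 + w ^ 2))
          = 2 * w / (Real.sqrt (1 + w ^ 2) ^ 2) from by ring, hsqrt]
      rw [div_eq_div_iff h1wpos.ne' (by positivity : (0:ℝ) < r).ne']
      have hww : w * (c + r) = 2 * s := by rw [hw_def]; field_simp
      linear_combination (1+w^2)*hww - w*h1w
    · rw [hθ_def, Real.cos_two_mul, Real.cos_arctan]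
      rw [show 2 * (1 / Real.sqrt (1 + w ^ 2)) ^ 2 - 1
          = 2 / (Real.sqrt (1 + w ^ 2) ^ 2) - 1 from by ring, hsqrt]
      rw [show (2:ℝ) / (1 + w ^ 2) - 1 = (1 - w ^ 2) / (1 + w ^ 2) from by
        field_simp; ring]
      rw [div_eq_div_iff h1wpos.ne' (by positivity : (0:ℝ) < r).ne']
      have hG : ((1-w^2)*r)*(c+r) = (c*(1+w^2))*(c+r) := by
        linear_combination r*h1w' - c*h1w
      exact mul_right_cancel₀ (ne_of_gt hcr) hG
    · rw [hθ_def]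
      have h := Real.arctan_strictMono.monotone hw0
      rw [Real.arctan_zero] at h
      linarith
    · rw [hθ_def]
      have h := Real.arctan_strictMono.monotone hw1
      rw [Real.arctan_one] at h
      linarith
  obtain ⟨hθsin, hθcos, hθ0, hθtop⟩ := hθsc
  clear_value s c r θ
  have hL3 : x - Real.pi/2 ≤ θ := lemL3 x s r θ hxpi hs0 hs1 hcosx hrpos hr2 hθsin hθ0 hθtop
  have hL4 : 2*θ ≤ x + Real.pi/3 :=
    lemL4 x s c r θ hx0 hxpi hs_def hs0 hc0 hsc hsinx hcosx hrpos hr2 hθsin hθ0 hθtop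
  set u := α * (x - Real.pi / 2 - θ) with hu_def
  set δ := x - Real.pi/2 - u with hδ_def
  have hθδ : θ ≤ δ := by
    rw [hδ_def, hu_def]
    nlinarith only [mul_nonneg (sub_nonneg.2 h1.le) (sub_nonneg.2 hL3)]
  have hδtop : δ ≤ 5*Real.pi/6 := by
    rw [hδ_def, hu_def]
    nlinarith only [mul_nonneg (sub_nonneg.2 h2.le) (sub_nonneg.2 hL3), hL4]
  have hc1' : Real.cos (u - x) = -Real.sin δ := by
    rw [show u - x = -(δ + Real.pi/2) from by rw [hδ_def]; ring, Real.cos_neg,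
      Real.cos_add_pi_div_two]
  have hc2' : Real.cos (u - (q:ℝ)*x) = -Real.sin (δ + ((q:ℝ)-1)*x) := by
    rw [show u - (q:ℝ)*x = -((δ + ((q:ℝ)-1)*x) + Real.pi/2) from by rw [hδ_def]; ring,
      Real.cos_neg, Real.cos_add_pi_div_two]
  rw [hc1', hc2']
  have hA1 : (0:ℝ) ≤ (2*s)^α := Real.rpow_nonneg (by linarith) α
  have hA2 : (0:ℝ) ≤ (1+3*s^2)^(α/2) := Real.rpow_nonneg (by positivity) (α/2)
  rcases le_abs.mp hq with hq2 | hq2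
  · -- 2 ≤ q
    have hQ2 : (2:ℝ) ≤ (q:ℝ) := by exact_mod_cast hq2
    have hzq : (0:ℤ) ≤ q - 1 := by omega
    have hn : (((q-1).toNat : ℕ) : ℝ) = (q:ℝ) - 1 := by
      rw [← Int.cast_natCast, Int.toNat_of_nonneg hzq]
      push_cast
      ring
    have hKEY := key_pos x δ s c r θ (q:ℝ) (q-1).toNat hx0 hxpi hsinx hs0 hc0 hc1 hrpos
      hθsin hθcos hθ0 hθδ hδtop hQ2 hn
    have hfac : (0:ℝ) ≤ 1/((q:ℝ)-1) * (2*s)^α * (1+3*s^2)^(α/2) :=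
      mul_nonneg (mul_nonneg (one_div_nonneg.2 (by linarith)) hA1) hA2
    have hbr : (q:ℝ) * -Real.sin δ - -Real.sin (δ + ((q:ℝ)-1)*x) ≤ 0 := by
      linarith only [hKEY]
    exact mul_nonpos_iff.2 (Or.inl ⟨hfac, hbr⟩)
  · -- 2 ≤ -q
    have hQ2 : (q:ℝ) ≤ -2 := by
      have h' : (2:ℝ) ≤ -(q:ℝ) := by exact_mod_cast hq2
      linarith
    have hPcase : -(q:ℝ) = 2 ∨ 3 ≤ -(q:ℝ) := by
      rcases (by omega : q = -2 ∨ q ≤ -3) with h' | h'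
      · left; rw [h']; norm_num
      · right
        have : (q:ℝ) ≤ -3 := by exact_mod_cast h'
        linarith
    have hKEY := key_neg x δ s c r θ (-(q:ℝ)) hx0 hxpi hsinx hcosx htay2 htay3 hs0 hc0 hc1
      hsc hrpos hr2 hθsin hθcos hθ0 hθδ hδtop (by linarith) hPcase
    have hbr : 0 ≤ (q:ℝ) * -Real.sin δ - -Real.sin (δ + ((q:ℝ)-1)*x) := by
      rw [show δ + ((q:ℝ)-1)*x = -((-(q:ℝ)+1)*x - δ) from by ring, Real.sin_neg]
      linarith only [hKEY]
    have hfac : 1/((q:ℝ)-1) * (2*s)^α * (1+3*s^2)^(α/2) ≤ 0 := by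
      have hd : 1/((q:ℝ)-1) ≤ 0 :=
        div_nonpos_of_nonneg_of_nonpos (by norm_num) (by linarith)
      exact mul_nonpos_iff.2 (Or.inr ⟨mul_nonpos_iff.2 (Or.inr ⟨hd, hA1⟩), hA2⟩)
    exact mul_nonpos_iff.2 (Or.inr ⟨hfac, hbr⟩)
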